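/- Let s ≥ 3 and s+2 ≤ t ≤ 2s-1 be integers. Suppose Q is a colour scheme for K_t with parameter s such that v(Q') ≤ v(Q) for every colour scheme Q' for K_t with parameter s, and suppose that the largest block D of Q has size at least t/2. Then D has size exactly s. -/
import Mathlib


/-- The pair `(s,t)` is regular if `s ≥ 11` and `s+3 ≤ t ≤ 2s-4`, or if
`(s,t) ∈ {(10,14),(10,15)}`. -/
def IsRegularPair (s t : ℕ) : Prop :=
  (11 ≤ s ∧ s + 3 ≤ t ∧ t ≤ 2 * s - 4) ∨ (s = 10 ∧ t = 14) ∨ (s = 10 ∧ t = 15)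

open Classical in
/-- The exponent `α = α_{s,t}`. -/
noncomputable def ERalpha (s t : ℕ) : ℝ :=
  if IsRegularPair s t then
    (((s : ℝ) - 2) * ((t : ℝ) - (s : ℝ)) * ((t : ℝ) + (s : ℝ) - 1) + 2 * (t : ℝ) - 2 * (s : ℝ)) /
      ((2 * (s : ℝ) - 3) * ((t : ℝ) - (s : ℝ)) * ((t : ℝ) + (s : ℝ) - 1) - 2 * (s : ℝ) + 4)
  else
    (((s : ℝ) - 2) * ((t : ℝ) - (s : ℝ)) * ((s : ℝ) - 1) + (s : ℝ) - 1) /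
      ((2 * (s : ℝ) - 3) * ((t : ℝ) - (s : ℝ)) * ((s : ℝ) - 1) + 2 * (s : ℝ) - (t : ℝ))

/-- `δ = s - (2s-1)α`. -/
noncomputable def ERdelta (s t : ℕ) : ℝ := (s : ℝ) - (2 * (s : ℝ) - 1) * ERalpha s t

/-- `η = 2(1-α) - δ`. -/
noncomputable def EReta (s t : ℕ) : ℝ := 2 * (1 - ERalpha s t) - ERdelta s t

/-- A colour scheme for `K_t` with parameter `s`: a set of `t` nodes together with a
family of blocks (colours), each of size at least `2` and at most `s`, such that every
pair of distinct nodes is contained in exactly one block. -/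
structure ColourScheme (s t : ℕ) where
  blocks : Finset (Finset (Fin t))
  two_le_card : ∀ D ∈ blocks, 2 ≤ D.card
  card_le_s : ∀ D ∈ blocks, D.card ≤ s
  existsUnique_block : ∀ x y : Fin t, x ≠ y → ∃! D, D ∈ blocks ∧ x ∈ D ∧ y ∈ D

/-- The value `v(Q) = t - 2 + (b-1)δ + (l-2)(α-1)` of a scheme, where `b` is the number
of blocks and `l` the number of labels. -/
noncomputable def schemeValue {s t : ℕ} (Q : ColourScheme s t) : ℝ :=
  (t : ℝ) - 2 + ((Q.blocks.card : ℝ) - 1) * ERdelta s t +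
    ((∑ D ∈ Q.blocks, (D.card : ℝ)) - 2) * (ERalpha s t - 1)

set_option maxHeartbeats 2000000 in
lemma ER_scalar (s t : ℕ) (hs : 3 ≤ s) (ht1 : s + 2 ≤ t) (ht2 : t ≤ 2 * s - 1) :
    ERalpha s t < 1/2 ∧ 2 * (1 - ERalpha s t) < (t : ℝ) * EReta s t := by
  have hT1 : (s:ℝ) + 2 ≤ (t:ℝ) := by exact_mod_cast ht1
  have hT2 : (t:ℝ) + 1 ≤ 2 * (s:ℝ) := by
    have : t + 1 ≤ 2 * s := by omega
    exact_mod_cast this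
  have hS : (3:ℝ) ≤ (s:ℝ) := by exact_mod_cast hs
  set S := (s:ℝ); set T := (t:ℝ)
  set u := T - S - 2 with hu'
  set w := 2*S - 1 - T with hw'
  have hu : (0:ℝ) ≤ u := by simp only [hu']; linarith
  have hw : (0:ℝ) ≤ w := by simp only [hw']; linarith
  have m2 := mul_nonneg hu hw
  have m3 := mul_nonneg hu hu
  have m4 := mul_nonneg hw hw
  have m5 := mul_nonneg m3 hu
  have m6 := mul_nonneg m3 hw
  have m7 := mul_nonneg m2 hw
  have m8 := mul_nonneg m4 hw
  have heta : EReta s t = (2*S - 3) * ERalpha s t - (S - 2) := by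
    simp only [EReta, ERdelta]; ring
  rw [heta]
  unfold ERalpha
  split_ifs with h
  · set N := (S - 2) * (T - S) * (T + S - 1) + 2*T - 2*S with hN
    set Dd := (2*S - 3) * (T - S) * (T + S - 1) - 2*S + 4 with hDd
    have hDpos : 0 < Dd := by
      have hid : Dd = 40 + 38*w + 8*w*w + 65*u + 40*(u*w) + 4*(u*w*w) + 35*(u*u)
          + 10*(u*u*w) + 6*(u*u*u) := by
        simp only [hDd, hu', hw']; ring
      rw [hid]; linarith
    constructor
    · rw [div_lt_iff₀ hDpos]
      have hid : 1/2 * Dd - N = (4 + 2*w + 7*u + 2*(u*w) + 3*(u*u))/2 := by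
        simp only [hDd, hN, hu', hw']; ring
      nlinarith [hid]
    · have key : (T*(S-2)+2) * Dd < (T*(2*S-3)+2) * N := by
        have hid : (T*(2*S-3)+2) * N - (T*(S-2)+2) * Dd
            = 26 + 34*w + 14*(w*w) + 2*(w*w*w) + 46*u + 40*(u*w) + 8*(u*w*w)
              + 28*(u*u) + 12*(u*u*w) + 6*(u*u*u) := by
          simp only [hDd, hN, hu', hw']; ring
        nlinarith [hid]
      have expand : T * ((2*S-3) * (N/Dd) - (S-2)) - 2*(1 - N/Dd)
          = ((T*(2*S-3)+2)*N - (T*(S-2)+2)*Dd)/Dd := by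
        field_simp; ring
      have hpos : 0 < ((T*(2*S-3)+2)*N - (T*(S-2)+2)*Dd)/Dd :=
        div_pos (by linarith) hDpos
      linarith [expand ▸ hpos]
  · set N := (S - 2) * (T - S) * (S - 1) + S - 1 with hN
    set Dd := (2*S - 3) * (T - S) * (S - 1) + 2*S - T with hDd
    have hDpos : 0 < Dd := by
      have hid : Dd = 13 + 15*w + 4*(w*w) + 20*u + 15*(u*w) + 2*(u*w*w) + 11*(u*u)
          + 4*(u*u*w) + 2*(u*u*u) := by
        simp only [hDd, hu', hw']; ring
      rw [hid]; linarith
    constructor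
    · rw [div_lt_iff₀ hDpos]
      have hid : 1/2 * Dd - N = (1 + w + 2*u + u*w + u*u)/2 := by
        simp only [hDd, hN, hu', hw']; ring
      nlinarith [hid]
    · have key : (T*(S-2)+2) * Dd < (T*(2*S-3)+2) * N := by
        have hid : (T*(2*S-3)+2) * N - (T*(S-2)+2) * Dd
            = 11 + 14*w + 6*(w*w) + w*w*w + 18*u + 15*(u*w) + 3*(u*w*w)
              + 10*(u*u) + 4*(u*u*w) + 2*(u*u*u) := by
          simp only [hDd, hN, hu', hw']; ring
        nlinarith [hid]
      have expand : T * ((2*S-3) * (N/Dd) - (S-2)) - 2*(1 - N/Dd)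
          = ((T*(2*S-3)+2)*N - (T*(S-2)+2)*Dd)/Dd := by
        field_simp; ring
      have hpos : 0 < ((T*(2*S-3)+2)*N - (T*(S-2)+2)*Dd)/Dd :=
        div_pos (by linarith) hDpos
      linarith [expand ▸ hpos]

set_option maxHeartbeats 2000000 in
/-- **Lemma (contains).** Let `Q` be a colour scheme for `K_t` with parameter `s` of
maximal value, and suppose the largest block `D` of `Q` has size at least `t/2`. Then
`D` has size exactly `s`. -/
theorem largest_block_card_eq (s t : ℕ) (hs : 3 ≤ s) (ht1 : s + 2 ≤ t) (ht2 : t ≤ 2 * s - 1)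
    (Q : ColourScheme s t)
    (hmax : ∀ Q' : ColourScheme s t, schemeValue Q' ≤ schemeValue Q)
    (D : Finset (Fin t)) (hD : D ∈ Q.blocks)
    (hlargest : ∀ D' ∈ Q.blocks, D'.card ≤ D.card)
    (hsize : (t : ℝ) / 2 ≤ (D.card : ℝ)) :
    D.card = s := by
  classical
  by_contra hne
  have hdles : D.card ≤ s := Q.card_le_s D hD
  have hdlt : D.card < s := lt_of_le_of_ne hdles hne
  have htd : t ≤ 2 * D.card := by
    have h2 : (t:ℝ) ≤ 2 * (D.card:ℝ) := by linarith
    exact_mod_cast h2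
  have hd3 : 3 ≤ D.card := by omega
  have ht5 : 5 ≤ t := by omega
  obtain ⟨x, hx⟩ : ∃ x : Fin t, x ∉ D := by
    by_contra hall
    push_neg at hall
    have hsub : (Finset.univ : Finset (Fin t)) ⊆ D := fun z _ => hall z
    have := Finset.card_le_card hsub
    simp only [Finset.card_univ, Fintype.card_fin] at this
    omega
  have hxy : ∀ y ∈ D, x ≠ y := fun y hy h => hx (h ▸ hy)
  have huniq : ∀ C ∈ Q.blocks, ∀ C' ∈ Q.blocks, ∀ a b : Fin t, a ≠ b →
      a ∈ C → b ∈ C → a ∈ C' → b ∈ C' → C = C' := by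
    intro C hC C' hC' a b hab ha hb ha' hb'
    obtain ⟨C₀, _, hu⟩ := Q.existsUnique_block a b hab
    rw [hu C ⟨hC, ha, hb⟩, hu C' ⟨hC', ha', hb'⟩]
  have hBex : ∀ y : Fin t, ∃ C, y ∈ D →
      (C ∈ Q.blocks ∧ x ∈ C ∧ y ∈ C) ∧
        ∀ C', C' ∈ Q.blocks → x ∈ C' → y ∈ C' → C' = C := by
    intro y
    by_cases hy : y ∈ D
    · obtain ⟨C, hC, hu⟩ := Q.existsUnique_block x y (hxy y hy)
      exact ⟨C, fun _ => ⟨hC, fun C' h1 h2 h3 => hu C' ⟨h1, h2, h3⟩⟩⟩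
    · exact ⟨∅, fun h => absurd h hy⟩
  choose B hB using hBex
  have hBmem : ∀ y ∈ D, B y ∈ Q.blocks := fun y hy => ((hB y hy).1).1
  have hBx : ∀ y ∈ D, x ∈ B y := fun y hy => ((hB y hy).1).2.1
  have hBy : ∀ y ∈ D, y ∈ B y := fun y hy => ((hB y hy).1).2.2
  have hBu : ∀ y ∈ D, ∀ C' ∈ Q.blocks, x ∈ C' → y ∈ C' → C' = B y :=
    fun y hy C' h1 h2 h3 => (hB y hy).2 C' h1 h2 h3
  have hBD : ∀ y ∈ D, ∀ z ∈ D, z ∈ B y → z = y := by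
    intro y hy z hz hzB
    by_contra hne'
    have hDB : D = B y := huniq D hD (B y) (hBmem y hy) z y hne' hz hy hzB (hBy y hy)
    exact hx (hDB ▸ hBx y hy)
  have hBne : ∀ y ∈ D, B y ≠ D := fun y hy hEq => hx (hEq ▸ hBx y hy)
  have hBinj : ∀ y ∈ D, ∀ y' ∈ D, B y = B y' → y = y' :=
    fun y hy y' hy' hEq => hBD y' hy' y hy (hEq ▸ hBy y hy)
  set P : Finset (Finset (Fin t)) := D.image B with hP
  have hPmem : ∀ C, C ∈ P ↔ ∃ y ∈ D, B y = C := by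
    intro C; simp [hP, Finset.mem_image]
  have hPsub : P ⊆ Q.blocks := by
    intro C hC
    obtain ⟨y, hy, rfl⟩ := (hPmem C).1 hC
    exact hBmem y hy
  have hPx : ∀ C ∈ P, x ∈ C := by
    intro C hC
    obtain ⟨y, hy, rfl⟩ := (hPmem C).1 hC
    exact hBx y hy
  have hPcard : P.card = D.card :=
    Finset.card_image_of_injOn (fun y hy y' hy' h => hBinj y hy y' hy' h)
  have hDP : D ∉ P := by
    intro hDP
    obtain ⟨y, hy, h⟩ := (hPmem D).1 hDP
    exact hBne y hy h
  set P3 : Finset (Finset (Fin t)) := P.filter (fun C => 3 ≤ C.card) with hP3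
  set P2 : Finset (Finset (Fin t)) := P.filter (fun C => ¬ 3 ≤ C.card) with hP2
  have hP2card : ∀ C ∈ P2, C.card = 2 := by
    intro C hC
    rw [hP2, Finset.mem_filter] at hC
    have := Q.two_le_card C (hPsub hC.1)
    omega
  have hP3sub : P3 ⊆ P := Finset.filter_subset _ _
  have hP2sub : P2 ⊆ P := Finset.filter_subset _ _
  set Dx : Finset (Fin t) := insert x D with hDx
  have hDxcard : Dx.card = D.card + 1 := Finset.card_insert_of_notMem hx
  set W : Finset (Fin t) := P3.biUnion (fun C => C \ Dx) with hW
  have hWmem : ∀ w, w ∈ W ↔ ∃ C ∈ P3, w ∈ C ∧ w ∉ Dx := by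
    intro w
    simp only [hW, Finset.mem_biUnion, Finset.mem_sdiff]
  have hWx : ∀ w ∈ W, w ≠ x := by
    intro w hw
    obtain ⟨C, _, _, hwd⟩ := (hWmem w).1 hw
    intro h; exact hwd (h ▸ Finset.mem_insert_self x D)
  have hWD : ∀ w ∈ W, w ∉ D := by
    intro w hw
    obtain ⟨C, _, _, hwd⟩ := (hWmem w).1 hw
    intro h; exact hwd (Finset.mem_insert_of_mem h)
  set E : Finset (Finset (Fin t)) := P3.image (fun C => C.erase x) with hE
  set Pr : Finset (Finset (Fin t)) := W.image (fun w => ({x, w} : Finset (Fin t))) with hPr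
  set NB : Finset (Finset (Fin t)) := ((Q.blocks \ insert D P) ∪ {Dx}) ∪ (E ∪ Pr) with hNB
  have hNBmem : ∀ C, C ∈ NB ↔
      ((C ∈ Q.blocks ∧ C ≠ D ∧ C ∉ P) ∨ C = Dx ∨
        (∃ C₀ ∈ P3, C = C₀.erase x) ∨ ∃ w ∈ W, C = ({x, w} : Finset (Fin t))) := by
    intro C
    simp only [hNB, hE, hPr, Finset.mem_union, Finset.mem_sdiff, Finset.mem_insert,
      Finset.mem_singleton, Finset.mem_image]
    constructor
    · rintro ((⟨h1, h2⟩ | h) | (⟨C₀, h3, h4⟩ | ⟨w, h5, h6⟩))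
      · exact Or.inl ⟨h1, fun h => h2 (Or.inl h), fun h => h2 (Or.inr h)⟩
      · exact Or.inr (Or.inl h)
      · exact Or.inr (Or.inr (Or.inl ⟨C₀, h3, h4.symm⟩))
      · exact Or.inr (Or.inr (Or.inr ⟨w, h5, h6.symm⟩))
    · rintro (⟨h1, h2, h3⟩ | h | ⟨C₀, h3, h4⟩ | ⟨w, h5, h6⟩)
      · exact Or.inl (Or.inl ⟨h1, fun h => h.elim h2 h3⟩)
      · exact Or.inl (Or.inr h)
      · exact Or.inr (Or.inl ⟨C₀, h3, h4.symm⟩)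
      · exact Or.inr (Or.inr ⟨w, h5, h6.symm⟩)
  -- key exclusions
  have hDxnb : Dx ∉ Q.blocks := by
    intro hmem
    obtain ⟨y1, hy1, y2, hy2, hne12⟩ := Finset.one_lt_card.mp (by omega : 1 < D.card)
    have : D = Dx := huniq D hD Dx hmem y1 y2 hne12 hy1 hy2
      (Finset.mem_insert_of_mem hy1) (Finset.mem_insert_of_mem hy2)
    exact hx (this ▸ Finset.mem_insert_self x D)
  have hErasenb : ∀ C ∈ P3, C.erase x ∉ Q.blocks := by
    intro C hC hmem
    have hCP := hP3sub hC
    have hxC := hPx C hCP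
    have hcard3 : 3 ≤ C.card := (Finset.mem_filter.mp hC).2
    have hcard : 2 ≤ (C.erase x).card := by
      rw [Finset.card_erase_of_mem hxC]; omega
    obtain ⟨a, ha, b, hb, hab⟩ := Finset.one_lt_card.mp (by omega : 1 < (C.erase x).card)
    have : C = C.erase x := huniq C (hPsub hCP) (C.erase x) hmem a b hab
      (Finset.mem_of_mem_erase ha) (Finset.mem_of_mem_erase hb) ha hb
    exact Finset.notMem_erase x C (this ▸ hxC)
  have hPairnb : ∀ w ∈ W, ({x, w} : Finset (Fin t)) ∉ Q.blocks := by
    intro w hw hmem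
    obtain ⟨C, hC, hwC, _⟩ := (hWmem w).1 hw
    have hCP := hP3sub hC
    have hxw : x ≠ w := fun h => hWx w hw h.symm
    have : C = {x, w} := huniq C (hPsub hCP) _ hmem x w hxw (hPx C hCP) hwC
      (Finset.mem_insert_self _ _) (Finset.mem_insert_of_mem (Finset.mem_singleton_self w))
    have hcard3 : 3 ≤ C.card := (Finset.mem_filter.mp hC).2
    rw [this, Finset.card_insert_of_notMem (by simp [hxw]), Finset.card_singleton] at hcard3
    omega
  have hcard3 : ∀ (a b c : Fin t) (C : Finset (Fin t)), a ≠ b → a ≠ c → b ≠ c →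
      a ∈ C → b ∈ C → c ∈ C → 3 ≤ C.card := by
    intro a b c C h1 h2 h3 ha hb hc
    have hsub : ({a, b, c} : Finset (Fin t)) ⊆ C := by
      intro z hz
      simp only [Finset.mem_insert, Finset.mem_singleton] at hz
      rcases hz with rfl | rfl | rfl <;> assumption
    have := Finset.card_le_card hsub
    rwa [Finset.card_insert_of_notMem (by simp [h1, h2]),
      Finset.card_insert_of_notMem (by simp [h3]), Finset.card_singleton] at this
  have covB : ∀ b : Fin t, b ≠ x → ∃! C, C ∈ NB ∧ x ∈ C ∧ b ∈ C := by
    intro b hbx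
    by_cases hbD : b ∈ D
    · refine ⟨Dx, ⟨(hNBmem Dx).2 (Or.inr (Or.inl rfl)), Finset.mem_insert_self x D,
        Finset.mem_insert_of_mem hbD⟩, ?_⟩
      rintro C' ⟨hC', hx', hb'⟩
      rcases (hNBmem C').1 hC' with ⟨h1, h2, h3⟩ | h | ⟨C₀, hC₀, rfl⟩ | ⟨w, hw, rfl⟩
      · exact absurd ((hPmem C').2 ⟨b, hbD, (hBu b hbD C' h1 hx' hb').symm⟩) h3
      · exact h
      · exact absurd hx' (Finset.notMem_erase x C₀)
      · rcases Finset.mem_insert.mp hb' with h | h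
        · exact absurd h hbx
        · exact absurd hbD ((Finset.mem_singleton.mp h) ▸ hWD w hw)
    · obtain ⟨C₀, ⟨hC₀m, hxC₀, hbC₀⟩, hu₀⟩ := Q.existsUnique_block x b (Ne.symm hbx)
      have hbDx : b ∉ Dx := by
        simp only [hDx, Finset.mem_insert]
        push_neg
        exact ⟨hbx, hbD⟩
      by_cases hCP : C₀ ∈ P
      · obtain ⟨y, hyD, hyB⟩ := (hPmem C₀).1 hCP
        have hyC₀ : y ∈ C₀ := hyB ▸ hBy y hyD
        have hyb : y ≠ b := fun h => hbD (h ▸ hyD)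
        have hC₀3 : C₀ ∈ P3 := Finset.mem_filter.mpr
          ⟨hCP, hcard3 x y b C₀ (hxy y hyD) (Ne.symm hbx) hyb hxC₀ hyC₀ hbC₀⟩
        have hbW : b ∈ W := (hWmem b).2 ⟨C₀, hC₀3, hbC₀, hbDx⟩
        refine ⟨{x, b}, ⟨(hNBmem _).2 (Or.inr (Or.inr (Or.inr ⟨b, hbW, rfl⟩))),
          Finset.mem_insert_self _ _, Finset.mem_insert_of_mem (Finset.mem_singleton_self b)⟩, ?_⟩
        rintro C' ⟨hC', hx', hb'⟩
        rcases (hNBmem C').1 hC' with ⟨h1, h2, h3⟩ | rfl | ⟨C₁, hC₁, rfl⟩ | ⟨w, hw, rfl⟩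
        · exact absurd (hu₀ C' ⟨h1, hx', hb'⟩ ▸ hCP) h3
        · exact absurd hb' hbDx
        · exact absurd hx' (Finset.notMem_erase x C₁)
        · rcases Finset.mem_insert.mp hb' with h | h
          · exact absurd h hbx
          · rw [Finset.mem_singleton.mp h]
      · have hC₀D : C₀ ≠ D := fun h => hx (h ▸ hxC₀)
        refine ⟨C₀, ⟨(hNBmem C₀).2 (Or.inl ⟨hC₀m, hC₀D, hCP⟩), hxC₀, hbC₀⟩, ?_⟩
        rintro C' ⟨hC', hx', hb'⟩
        rcases (hNBmem C').1 hC' with ⟨h1, h2, h3⟩ | rfl | ⟨C₁, hC₁, rfl⟩ | ⟨w, hw, rfl⟩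
        · exact hu₀ C' ⟨h1, hx', hb'⟩
        · exact absurd hb' hbDx
        · exact absurd hx' (Finset.notMem_erase x C₁)
        · rcases Finset.mem_insert.mp hb' with h | h
          · exact absurd h hbx
          · obtain ⟨C₁, hC₁, hwC₁, _⟩ := (hWmem w).1 hw
            have hbC₁ : b ∈ C₁ := (Finset.mem_singleton.mp h) ▸ hwC₁
            have : C₁ = C₀ := huniq C₁ (hPsub (hP3sub hC₁)) C₀ hC₀m x b (Ne.symm hbx)
              (hPx C₁ (hP3sub hC₁)) hbC₁ hxC₀ hbC₀
            exact absurd (this ▸ hP3sub hC₁) hCP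
  have covA1 : ∀ a ∈ D, ∀ b ∈ D, a ≠ b → ∃! C, C ∈ NB ∧ a ∈ C ∧ b ∈ C := by
    intro a haD b hbD hab
    refine ⟨Dx, ⟨(hNBmem Dx).2 (Or.inr (Or.inl rfl)), Finset.mem_insert_of_mem haD,
      Finset.mem_insert_of_mem hbD⟩, ?_⟩
    rintro C' ⟨hC', ha', hb'⟩
    rcases (hNBmem C').1 hC' with ⟨h1, h2, h3⟩ | h | ⟨C₁, hC₁, rfl⟩ | ⟨w, hw, rfl⟩
    · exact absurd (huniq C' h1 D hD a b hab ha' hb' haD hbD) h2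
    · exact h
    · obtain ⟨y, hyD, hyB⟩ := (hPmem C₁).1 (hP3sub hC₁)
      have ha2 : a = y := hBD y hyD a haD (hyB ▸ Finset.mem_of_mem_erase ha')
      have hb2 : b = y := hBD y hyD b hbD (hyB ▸ Finset.mem_of_mem_erase hb')
      exact absurd (ha2.trans hb2.symm) hab
    · have hax : a ≠ x := fun h => hx (h ▸ haD)
      have hbx : b ≠ x := fun h => hx (h ▸ hbD)
      rcases Finset.mem_insert.mp ha' with h | h
      · exact absurd h hax
      · rcases Finset.mem_insert.mp hb' with h' | h'
        · exact absurd h' hbx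
        · exact absurd ((Finset.mem_singleton.mp h).trans (Finset.mem_singleton.mp h').symm) hab
  have covA2 : ∀ a b : Fin t, a ≠ x → b ≠ x → a ≠ b → b ∉ D →
      ∃! C, C ∈ NB ∧ a ∈ C ∧ b ∈ C := by
    intro a b hax hbx hab hbD
    obtain ⟨C₀, ⟨hC₀m, haC₀, hbC₀⟩, hu₀⟩ := Q.existsUnique_block a b hab
    have hC₀D : C₀ ≠ D := fun h => hbD (h ▸ hbC₀)
    by_cases hCP : C₀ ∈ P
    · have hxC₀ : x ∈ C₀ := hPx C₀ hCP
      have hC₀3 : C₀ ∈ P3 := Finset.mem_filter.mpr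
        ⟨hCP, hcard3 x a b C₀ (Ne.symm hax) (Ne.symm hbx) hab hxC₀ haC₀ hbC₀⟩
      refine ⟨C₀.erase x, ⟨(hNBmem _).2 (Or.inr (Or.inr (Or.inl ⟨C₀, hC₀3, rfl⟩))),
        Finset.mem_erase.mpr ⟨hax, haC₀⟩, Finset.mem_erase.mpr ⟨hbx, hbC₀⟩⟩, ?_⟩
      rintro C' ⟨hC', ha', hb'⟩
      rcases (hNBmem C').1 hC' with ⟨h1, h2, h3⟩ | rfl | ⟨C₁, hC₁, rfl⟩ | ⟨w, hw, rfl⟩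
      · exact absurd (hu₀ C' ⟨h1, ha', hb'⟩ ▸ hCP) h3
      · rcases Finset.mem_insert.mp hb' with h | h
        · exact absurd h hbx
        · exact absurd h hbD
      · have : C₁ = C₀ := huniq C₁ (hPsub (hP3sub hC₁)) C₀ hC₀m a b hab
          (Finset.mem_of_mem_erase ha') (Finset.mem_of_mem_erase hb') haC₀ hbC₀
        rw [this]
      · rcases Finset.mem_insert.mp ha' with h | h
        · exact absurd h hax
        · rcases Finset.mem_insert.mp hb' with h' | h'
          · exact absurd h' hbx
          · exact absurd ((Finset.mem_singleton.mp h).trans (Finset.mem_singleton.mp h').symm) hab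
    · refine ⟨C₀, ⟨(hNBmem C₀).2 (Or.inl ⟨hC₀m, hC₀D, hCP⟩), haC₀, hbC₀⟩, ?_⟩
      rintro C' ⟨hC', ha', hb'⟩
      rcases (hNBmem C').1 hC' with ⟨h1, h2, h3⟩ | rfl | ⟨C₁, hC₁, rfl⟩ | ⟨w, hw, rfl⟩
      · exact hu₀ C' ⟨h1, ha', hb'⟩
      · rcases Finset.mem_insert.mp hb' with h | h
        · exact absurd h hbx
        · exact absurd h hbD
      · have : C₁ = C₀ := huniq C₁ (hPsub (hP3sub hC₁)) C₀ hC₀m a b hab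
          (Finset.mem_of_mem_erase ha') (Finset.mem_of_mem_erase hb') haC₀ hbC₀
        exact absurd (this ▸ hP3sub hC₁) hCP
      · rcases Finset.mem_insert.mp ha' with h | h
        · exact absurd h hax
        · rcases Finset.mem_insert.mp hb' with h' | h'
          · exact absurd h' hbx
          · exact absurd ((Finset.mem_singleton.mp h).trans (Finset.mem_singleton.mp h').symm) hab
  have hexu : ∀ a b : Fin t, a ≠ b → ∃! C, C ∈ NB ∧ a ∈ C ∧ b ∈ C := by
    intro a b hab
    have flip : ∀ {u v : Fin t}, (∃! C, C ∈ NB ∧ u ∈ C ∧ v ∈ C) →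
        ∃! C, C ∈ NB ∧ v ∈ C ∧ u ∈ C := by
      rintro u v ⟨C, ⟨h1, h2, h3⟩, hu⟩
      exact ⟨C, ⟨h1, h3, h2⟩, fun C' hk => hu C' ⟨hk.1, hk.2.2, hk.2.1⟩⟩
    rcases eq_or_ne a x with rfl | hax
    · exact covB b (Ne.symm hab)
    · rcases eq_or_ne b x with rfl | hbx
      · exact flip (covB a hax)
      · by_cases haD : a ∈ D
        · by_cases hbD : b ∈ D
          · exact covA1 a haD b hbD hab
          · exact covA2 a b hax hbx hab hbD
        · exact flip (covA2 b a hbx hax (Ne.symm hab) haD)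
  have hcardbounds : ∀ C ∈ NB, 2 ≤ C.card ∧ C.card ≤ s := by
    intro C hC
    rcases (hNBmem C).1 hC with ⟨h1, _, _⟩ | rfl | ⟨C₁, hC₁, rfl⟩ | ⟨w, hw, rfl⟩
    · exact ⟨Q.two_le_card C h1, Q.card_le_s C h1⟩
    · rw [hDxcard]; omega
    · have hxC₁ : x ∈ C₁ := hPx C₁ (hP3sub hC₁)
      have h3 : 3 ≤ C₁.card := (Finset.mem_filter.mp hC₁).2
      have hs' : C₁.card ≤ s := Q.card_le_s C₁ (hPsub (hP3sub hC₁))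
      rw [Finset.card_erase_of_mem hxC₁]
      omega
    · have hxw : x ≠ w := Ne.symm (hWx w hw)
      rw [Finset.card_insert_of_notMem (by simp [hxw]), Finset.card_singleton]
      omega
  set Q' : ColourScheme s t := ⟨NB, fun C hC => (hcardbounds C hC).1,
    fun C hC => (hcardbounds C hC).2, hexu⟩ with hQ'
  -- counting
  have hinssub : insert D P ⊆ Q.blocks := Finset.insert_subset hD hPsub
  have hinscard : (insert D P).card = D.card + 1 := by
    rw [Finset.card_insert_of_notMem hDP, hPcard]
  have herinj : ∀ C ∈ P3, ∀ C' ∈ P3, C.erase x = C'.erase x → C = C' := by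
    intro C hC C' hC' h
    rw [← Finset.insert_erase (hPx C (hP3sub hC)), h,
      Finset.insert_erase (hPx C' (hP3sub hC'))]
  have hEcard : E.card = P3.card :=
    Finset.card_image_of_injOn (fun C hC C' hC' h => herinj C hC C' hC' h)
  have hPrinj : ∀ w ∈ W, ∀ w' ∈ W, ({x, w} : Finset (Fin t)) = {x, w'} → w = w' := by
    intro w hw w' hw' h
    have : w ∈ ({x, w'} : Finset (Fin t)) := h ▸ Finset.mem_insert_of_mem
      (Finset.mem_singleton_self w)
    rcases Finset.mem_insert.mp this with h' | h'
    · exact absurd h' (hWx w hw)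
    · exact Finset.mem_singleton.mp h'
  have hPrcard : Pr.card = W.card :=
    Finset.card_image_of_injOn (fun w hw w' hw' h => hPrinj w hw w' hw' h)
  have hdisj1 : Disjoint (Q.blocks \ insert D P) ({Dx} : Finset (Finset (Fin t))) :=
    Finset.disjoint_singleton_right.mpr (fun h => hDxnb (Finset.mem_sdiff.mp h).1)
  have hdisj2 : Disjoint E Pr := by
    rw [Finset.disjoint_left]
    intro C hCE hCPr
    obtain ⟨C₁, hC₁, rfl⟩ := Finset.mem_image.mp hCE
    obtain ⟨w, hw, heq⟩ := Finset.mem_image.mp hCPr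
    have : x ∈ C₁.erase x := heq ▸ Finset.mem_insert_self x {w}
    exact Finset.notMem_erase x C₁ this
  have hdisj3 : Disjoint ((Q.blocks \ insert D P) ∪ {Dx}) (E ∪ Pr) := by
    rw [Finset.disjoint_left]
    intro C hCl hCr
    rcases Finset.mem_union.mp hCl with hCl | hCl
    · have hCb : C ∈ Q.blocks := (Finset.mem_sdiff.mp hCl).1
      rcases Finset.mem_union.mp hCr with hCr | hCr
      · obtain ⟨C₁, hC₁, rfl⟩ := Finset.mem_image.mp hCr
        exact hErasenb C₁ hC₁ hCb
      · obtain ⟨w, hw, rfl⟩ := Finset.mem_image.mp hCr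
        exact hPairnb w hw hCb
    · have hCDx : C = Dx := Finset.mem_singleton.mp hCl
      rcases Finset.mem_union.mp hCr with hCr | hCr
      · obtain ⟨C₁, hC₁, rfl⟩ := Finset.mem_image.mp hCr
        have : x ∈ C₁.erase x := hCDx ▸ Finset.mem_insert_self x D
        exact Finset.notMem_erase x C₁ this
      · obtain ⟨w, hw, heq⟩ := Finset.mem_image.mp hCr
        have hc2 : C.card ≤ 2 := by
          rw [← heq]
          exact le_trans (Finset.card_insert_le x {w}) (by simp)
        rw [hCDx, hDxcard] at hc2
        omega
  have hP23card : P3.card + P2.card = D.card := by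
    rw [hP3, hP2, Finset.card_filter_add_card_filter_not, hPcard]
  have hbcount : NB.card + P2.card = Q.blocks.card + W.card := by
    have h1 : NB.card = (Q.blocks \ insert D P).card + 1 + (E.card + Pr.card) := by
      rw [hNB, Finset.card_union_of_disjoint hdisj3, Finset.card_union_of_disjoint hdisj1,
        Finset.card_union_of_disjoint hdisj2, Finset.card_singleton]
    have h2 := Finset.card_sdiff_of_subset hinssub
    have h3 := Finset.card_le_card hinssub
    rw [hinscard] at h2 h3
    rw [h1, hEcard, hPrcard, h2]
    omega
  have hEsum : (∑ C ∈ E, C.card) + P3.card = ∑ C ∈ P3, C.card := by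
    rw [hE, Finset.sum_image (fun C hC C' hC' h => herinj C hC C' hC' h),
      Finset.card_eq_sum_ones P3, ← Finset.sum_add_distrib]
    exact Finset.sum_congr rfl (fun C hC => Finset.card_erase_add_one (hPx C (hP3sub hC)))
  have hPrsum : ∑ C ∈ Pr, C.card = 2 * W.card := by
    rw [hPr, Finset.sum_image (fun w hw w' hw' h => hPrinj w hw w' hw' h)]
    rw [Finset.sum_congr rfl (fun w hw => ?_), Finset.sum_const, smul_eq_mul, mul_comm]
    rw [Finset.card_insert_of_notMem (by simp [Ne.symm (hWx w hw)]), Finset.card_singleton]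
  have hP2sum : ∑ C ∈ P2, C.card = 2 * P2.card := by
    rw [Finset.sum_congr rfl hP2card, Finset.sum_const, smul_eq_mul, mul_comm]
  have hPsum : (∑ C ∈ P3, C.card) + 2 * P2.card = ∑ C ∈ P, C.card := by
    rw [← hP2sum, hP3, hP2, Finset.sum_filter_add_sum_filter_not]
  have hkeptsum : (∑ C ∈ Q.blocks \ insert D P, C.card) + (D.card + ∑ C ∈ P, C.card)
      = ∑ C ∈ Q.blocks, C.card := by
    rw [← Finset.sum_insert hDP]
    exact Finset.sum_sdiff hinssub
  have hNBsum : ∑ C ∈ NB, C.card = (∑ C ∈ Q.blocks \ insert D P, C.card) + (D.card + 1)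
      + ((∑ C ∈ E, C.card) + ∑ C ∈ Pr, C.card) := by
    rw [hNB, Finset.sum_union hdisj3, Finset.sum_union hdisj1, Finset.sum_union hdisj2,
      Finset.sum_singleton, hDxcard]
  have hlcount : (∑ C ∈ NB, C.card) + 2 * P2.card + P3.card
      = (∑ C ∈ Q.blocks, C.card) + 1 + 2 * W.card := by
    rw [hNBsum, hPrsum]
    omega
  -- W cardinality facts
  have hWdisj : ∀ C ∈ P3, ∀ C' ∈ P3, C ≠ C' → Disjoint (C \ Dx) (C' \ Dx) := by
    intro C hC C' hC' hne'
    rw [Finset.disjoint_left]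
    intro z hz hz'
    have hzC : z ∈ C := (Finset.mem_sdiff.mp hz).1
    have hzC' : z ∈ C' := (Finset.mem_sdiff.mp hz').1
    have hzx : x ≠ z := by
      intro h
      exact (Finset.mem_sdiff.mp hz).2 (h ▸ Finset.mem_insert_self x D)
    exact hne' (huniq C (hPsub (hP3sub hC)) C' (hPsub (hP3sub hC')) x z hzx
      (hPx C (hP3sub hC)) hzC (hPx C' (hP3sub hC')) hzC')
  have hWsum : W.card = ∑ C ∈ P3, (C \ Dx).card := Finset.card_biUnion hWdisj
  have hsdcard : ∀ C ∈ P3, (C \ Dx).card + 2 = C.card := by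
    intro C hC
    obtain ⟨y, hyD, hyB⟩ := (hPmem C).1 (hP3sub hC)
    have hxC : x ∈ C := hPx C (hP3sub hC)
    have hyC : y ∈ C := hyB ▸ hBy y hyD
    have hCint : C ∩ Dx = {x, y} := by
      ext z
      simp only [Finset.mem_inter, hDx, Finset.mem_insert, Finset.mem_singleton]
      constructor
      · rintro ⟨hzC, rfl | hzD⟩
        · exact Or.inl rfl
        · exact Or.inr (hBD y hyD z hzD (hyB ▸ hzC))
      · rintro (rfl | rfl)
        · exact ⟨hxC, Or.inl rfl⟩
        · exact ⟨hyC, Or.inr hyD⟩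
    have h2 := Finset.card_sdiff_add_card_inter C Dx
    rw [hCint, Finset.card_insert_of_notMem (by simp [hxy y hyD]),
      Finset.card_singleton] at h2
    omega
  have hm_le_e : P3.card ≤ W.card := by
    rw [hWsum, Finset.card_eq_sum_ones P3]
    apply Finset.sum_le_sum
    intro C hC
    have h1 := hsdcard C hC
    have h3 : 3 ≤ C.card := (Finset.mem_filter.mp hC).2
    omega
  have he_le1 : W.card ≤ P3.card * (D.card - 2) := by
    rw [hWsum]
    apply Finset.sum_le_card_nsmul
    intro C hC
    have h1 := hsdcard C hC
    have h2 := hlargest C (hPsub (hP3sub hC))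
    omega
  have he_le2 : W.card + (D.card + 1) ≤ t := by
    have hdisjWD : Disjoint W Dx := by
      rw [Finset.disjoint_left]
      intro w hw hwDx
      obtain ⟨C, _, _, h⟩ := (hWmem w).1 hw
      exact h hwDx
    have hsub2 := Finset.card_le_card (Finset.subset_univ (W ∪ Dx))
    rw [Finset.card_union_of_disjoint hdisjWD, Finset.card_univ, Fintype.card_fin,
      hDxcard] at hsub2
    omega
  -- real arithmetic
  obtain ⟨hhalf, heta2⟩ := ER_scalar s t hs ht1 ht2
  have hSR : (3:ℝ) ≤ (s:ℝ) := by exact_mod_cast hs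
  have hTR : (5:ℝ) ≤ (t:ℝ) := by exact_mod_cast ht5
  have hβ : (0:ℝ) < 1 - ERalpha s t := by
    have : ERalpha s t < 1/2 := hhalf
    linarith
  have hη : (0:ℝ) < EReta s t := by
    by_contra h
    push_neg at h
    have := mul_nonpos_of_nonneg_of_nonpos (by linarith : (0:ℝ) ≤ (t:ℝ)) h
    linarith
  have hδη' : ERdelta s t = 2 * (1 - ERalpha s t) - EReta s t := by
    unfold EReta; ring
  have hβη : EReta s t < 1 - ERalpha s t := by
    have hh : (2*(s:ℝ)-2) * ERalpha s t < (2*(s:ℝ)-2) * (1/2) :=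
      mul_lt_mul_of_pos_left hhalf (by linarith)
    unfold EReta ERdelta
    nlinarith [hh]
  -- cast facts
  have hkmR : (P3.card:ℝ) + (P2.card:ℝ) = (D.card:ℝ) := by exact_mod_cast hP23card
  have he1R : (P3.card:ℝ) ≤ (W.card:ℝ) := by exact_mod_cast hm_le_e
  have he2R : (W.card:ℝ) ≤ (P3.card:ℝ) * ((D.card:ℝ) - 2) := by
    have h1 : ((W.card:ℕ):ℝ) ≤ ((P3.card * (D.card - 2) : ℕ):ℝ) := by exact_mod_cast he_le1
    push_cast [Nat.cast_sub (by omega : 2 ≤ D.card)] at h1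
    linarith
  have he3R : (W.card:ℝ) + (D.card:ℝ) + 1 ≤ (t:ℝ) := by
    have h1 : ((W.card + (D.card + 1) : ℕ):ℝ) ≤ ((t:ℕ):ℝ) := by exact_mod_cast he_le2
    push_cast at h1
    linarith
  have htdR : (t:ℝ) ≤ 2 * (D.card:ℝ) := by exact_mod_cast htd
  have hdR : (3:ℝ) ≤ (D.card:ℝ) := by exact_mod_cast hd3
  -- value difference
  have hbR : (NB.card:ℝ) + (P2.card:ℝ) = (Q.blocks.card:ℝ) + (W.card:ℝ) := by
    exact_mod_cast hbcount
  have hlR : (∑ C ∈ NB, (C.card:ℝ)) + 2*(P2.card:ℝ) + (P3.card:ℝ)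
      = (∑ C ∈ Q.blocks, (C.card:ℝ)) + 1 + 2*(W.card:ℝ) := by
    have h1 : (((∑ C ∈ NB, C.card) + 2 * P2.card + P3.card : ℕ):ℝ)
        = (((∑ C ∈ Q.blocks, C.card) + 1 + 2 * W.card : ℕ):ℝ) := by exact_mod_cast hlcount
    push_cast at h1
    linarith
  have hQQ' : Q'.blocks = NB := rfl
  have hdiff : schemeValue Q' - schemeValue Q
      = ((W.card:ℝ) - (P2.card:ℝ)) * ERdelta s t
        + (1 + 2*(W.card:ℝ) - 2*(P2.card:ℝ) - (P3.card:ℝ)) * (ERalpha s t - 1) := by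
    have h1 : (NB.card:ℝ) = (Q.blocks.card:ℝ) + (W.card:ℝ) - (P2.card:ℝ) := by linarith
    have h2 : (∑ C ∈ NB, (C.card:ℝ))
        = (∑ C ∈ Q.blocks, (C.card:ℝ)) + 1 + 2*(W.card:ℝ) - 2*(P2.card:ℝ) - (P3.card:ℝ) := by
      linarith
    simp only [schemeValue, hQQ']
    rw [h1, h2]
    ring
  have hG : schemeValue Q' - schemeValue Q
      = (1 - ERalpha s t) * ((P3.card:ℝ) - 1) - EReta s t * ((W.card:ℝ) - (P2.card:ℝ)) := by
    rw [hdiff, hδη']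
    ring
  have hpos : 0 < schemeValue Q' - schemeValue Q := by
    rw [hG]
    rcases Nat.eq_zero_or_pos P3.card with hm0 | hmpos
    · have he0 : W.card = 0 := by
        rw [hm0, zero_mul] at he_le1
        omega
      have hm0R : (P3.card:ℝ) = 0 := by exact_mod_cast hm0
      have he0R : (W.card:ℝ) = 0 := by exact_mod_cast he0
      rw [hm0R, he0R]
      have hkdR : (P2.card:ℝ) = (D.card:ℝ) := by linarith
      rw [hkdR]
      nlinarith [mul_le_mul_of_nonneg_right htdR hη.le]
    · rcases Nat.lt_or_ge P3.card 2 with hm1 | hm2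
      · have hm1' : P3.card = 1 := by omega
        have hm1R : (P3.card:ℝ) = 1 := by exact_mod_cast hm1'
        have hkR : (P2.card:ℝ) = (D.card:ℝ) - 1 := by linarith
        rw [hm1R, hkR]
        have heR : (W.card:ℝ) ≤ (D.card:ℝ) - 2 := by
          rw [hm1R, one_mul] at he2R
          linarith
        nlinarith [hη, heR]
      · have hm2R : (2:ℝ) ≤ (P3.card:ℝ) := by exact_mod_cast hm2
        have hek : (W.card:ℝ) - (P2.card:ℝ) ≤ (P3.card:ℝ) - 1 := by linarith
        nlinarith [mul_le_mul_of_nonneg_left hek hη.le,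
          mul_pos (sub_pos.mpr hβη) (by linarith : (0:ℝ) < (P3.card:ℝ) - 1)]
  linarith [hmax Q']
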